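/- Let T ∈ (0,∞), β ∈ [0,1/2), λ, β̂ ∈ (−∞,1/2), L, L̂ ∈ [0,∞), and set ρ = max{λ, β̂} if L > 0 and ρ = β̂ if L = 0. Then for all t ∈ (0,T] it holds that ∫_0^t (t − s)^{−2β} ( L s^{−λ} + L̂ s^{−β̂} )^2 ds ≤ ( L + L̂ )^2 · ( max{T,1} )^{ 2|λ − β̂| · 1_{(0,∞)}(L) } · 𝔹( 1 − 2β, 1 − 2ρ ) · t^{( 1 − 2β − 2ρ )}. -/

import Mathlib

open MeasureTheory Set
open scoped ENNReal

noncomputable section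

/-- The Beta function `𝔹(x,y) = ∫_0^1 t^(x-1) (1-t)^(y-1) dt`. -/
def Beta (x y : ℝ) : ℝ :=
  ∫ t in (0:ℝ)..1, t ^ (x - 1) * (1 - t) ^ (y - 1)


lemma betaIntegrableAux (a b : ℝ) (ha : 0 < a) (hb : 0 < b) :
    IntervalIntegrable (fun u : ℝ => u ^ (a - 1) * (1 - u) ^ (b - 1)) volume 0 1 := by
  have hc := Complex.betaIntegral_convergent (u := (a:ℂ)) (v := (b:ℂ))
    (by simpa using ha) (by simpa using hb)
  rw [intervalIntegrable_iff_integrableOn_Ioc_of_le (by norm_num)] at hc ⊢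
  have hre : IntegrableOn
      (fun u : ℝ => (((u:ℂ) ^ ((a:ℂ) - 1) * (1 - (u:ℂ)) ^ ((b:ℂ) - 1)).re)) (Ioc 0 1) volume :=
    hc.re
  refine hre.congr_fun (fun u hu => ?_) measurableSet_Ioc
  have h1 : ((a:ℂ) - 1) = ((a - 1 : ℝ) : ℂ) := by push_cast; ring
  have h2 : ((b:ℂ) - 1) = ((b - 1 : ℝ) : ℂ) := by push_cast; ring
  have h3 : (1 : ℂ) - (u:ℂ) = ((1 - u : ℝ) : ℂ) := by push_cast; ring
  beta_reduce
  rw [h1, h2, h3, ← Complex.ofReal_cpow hu.1.le, ← Complex.ofReal_cpow (by linarith [hu.2]),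
    ← Complex.ofReal_mul, Complex.ofReal_re]

lemma Beta_symm_int (x y : ℝ) :
    (∫ u in (0:ℝ)..1, u ^ (y - 1) * (1 - u) ^ (x - 1)) = Beta x y := by
  rw [Beta]
  have h := intervalIntegral.integral_comp_sub_left (a := (0:ℝ)) (b := 1)
    (fun v : ℝ => v ^ (x - 1) * (1 - v) ^ (y - 1)) 1
  simp only [sub_zero, sub_self] at h
  rw [← h]
  apply intervalIntegral.integral_congr
  intro u _
  simp only
  ring_nf

lemma scaled_beta (x y t : ℝ) (hx : 0 < x) (hy : 0 < y) (ht : 0 < t) :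
    IntegrableOn (fun s : ℝ => (t - s) ^ (x - 1) * s ^ (y - 1)) (Ioc 0 t) volume ∧
    (∫ s in Ioc (0:ℝ) t, (t - s) ^ (x - 1) * s ^ (y - 1)) = t ^ (x + y - 1) * Beta x y := by
  set F : ℝ → ℝ := fun u => u ^ (y - 1) * (1 - u) ^ (x - 1) with hF
  have hFint : IntervalIntegrable F volume 0 1 := betaIntegrableAux y x hy hx
  have hcomp : IntervalIntegrable (fun s => F (s * (1/t))) volume 0 t := by
    have := hFint.comp_mul_right (c := 1/t)
    simpa [ht.ne'] using this
  set c : ℝ := t ^ (x - 1) * t ^ (y - 1) with hc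
  have heq : EqOn (fun s : ℝ => (t - s) ^ (x - 1) * s ^ (y - 1))
      (fun s => c * F (s * (1/t))) (Ioc 0 t) := by
    intro s hs
    have hs0 : 0 < s := hs.1
    have hst : s ≤ t := hs.2
    have h1 : (1 : ℝ) - s * (1/t) = (t - s) / t := by field_simp
    have h2 : t - s = t * ((t - s) / t) := by field_simp
    have h3 : s = t * (s * (1/t)) := by field_simp
    simp only [hF, h1]
    calc (t - s) ^ (x - 1) * s ^ (y - 1)
        = (t * ((t - s)/t)) ^ (x - 1) * (t * (s * (1/t))) ^ (y - 1) := by rw [← h2, ← h3]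
      _ = (t ^ (x-1) * ((t - s)/t) ^ (x - 1)) * (t ^ (y-1) * (s * (1/t)) ^ (y - 1)) := by
          rw [Real.mul_rpow ht.le (div_nonneg (by linarith) ht.le),
            Real.mul_rpow ht.le (by positivity)]
      _ = c * ((s * (1/t)) ^ (y - 1) * ((t - s)/t) ^ (x - 1)) := by rw [hc]; ring
  have hint : IntegrableOn (fun s : ℝ => (t - s) ^ (x - 1) * s ^ (y - 1)) (Ioc 0 t) volume := by
    have h1 : IntervalIntegrable (fun s => c * F (s * (1/t))) volume 0 t := hcomp.const_mul c
    rw [intervalIntegrable_iff_integrableOn_Ioc_of_le ht.le] at h1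
    exact h1.congr_fun (fun s hs => (heq hs).symm) measurableSet_Ioc
  refine ⟨hint, ?_⟩
  have hval : (∫ s in Ioc (0:ℝ) t, (t - s) ^ (x - 1) * s ^ (y - 1))
      = ∫ s in Ioc (0:ℝ) t, c * F (s * (1/t)) :=
    setIntegral_congr_fun measurableSet_Ioc heq
  rw [hval, ← intervalIntegral.integral_of_le ht.le]
  have hdiv : (∫ s in (0:ℝ)..t, c * F (s * (1/t))) = c * ∫ s in (0:ℝ)..t, F (s / t) := by
    rw [intervalIntegral.integral_const_mul]
    congr 1
    apply intervalIntegral.integral_congr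
    intro s _
    simp only
    congr 1
    ring
  rw [hdiv, intervalIntegral.integral_comp_div _ ht.ne']
  simp only [zero_div, div_self ht.ne', smul_eq_mul]
  rw [Beta_symm_int x y, hc]
  have hpow : t ^ (x - 1) * t ^ (y - 1) * t ^ (1:ℝ) = t ^ (x + y - 1) := by
    rw [← Real.rpow_add ht, ← Real.rpow_add ht]; ring_nf
  rw [Real.rpow_one] at hpow
  rw [← hpow]; ring


/-- **A priori bound for the singular diffusion (Itô isometry) convolution.**
For `T > 0`, `β ∈ [0,1/2)`, `λ, β̂ < 1/2`, `L, L̂ ≥ 0`, with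
`ρ = max{λ,β̂}` if `L > 0` and `ρ = β̂` if `L = 0`, it holds for all `t ∈ (0,T]` that
`∫_0^t (t-s)^{-2β} (L s^{-λ} + L̂ s^{-β̂})² ds
  ≤ (L + L̂)² (max{T,1})^{2|λ-β̂|·1_{(0,∞)}(L)} 𝔹(1-2β, 1-2ρ) t^{1-2β-2ρ}`. -/
theorem diffusion_convolution_bound
    (T : ℝ) (hT : 0 < T)
    (β : ℝ) (hβ0 : 0 ≤ β) (hβ1 : β < 1/2)
    (lam bhat : ℝ) (hlam : lam < 1/2) (hbhat : bhat < 1/2)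
    (L Lhat : ℝ) (hL : 0 ≤ L) (hLhat : 0 ≤ Lhat)
    (ρ : ℝ) (hρ : ρ = if 0 < L then max lam bhat else bhat) :
    ∀ t ∈ Set.Ioc (0:ℝ) T,
      (∫⁻ s in Set.Ioc (0:ℝ) t,
          ENNReal.ofReal ((t - s) ^ (-(2*β)) * (L * s ^ (-lam) + Lhat * s ^ (-bhat)) ^ 2)) ≤
        ENNReal.ofReal ((L + Lhat) ^ 2 *
          (max T 1) ^ (2 * |lam - bhat| * (if 0 < L then (1:ℝ) else 0)) *
          Beta (1 - 2*β) (1 - 2*ρ) * t ^ (1 - 2*β - 2*ρ)) := by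
  intro t ht
  obtain ⟨ht0, htT⟩ := ht
  set M : ℝ := max T 1 with hM
  have hM1 : (1:ℝ) ≤ M := le_max_right _ _
  have hM0 : (0:ℝ) < M := lt_of_lt_of_le one_pos hM1
  have htM : t ≤ M := htT.trans (le_max_left _ _)
  set ind : ℝ := if 0 < L then (1:ℝ) else 0 with hind
  set e1 : ℝ := |lam - bhat| * ind with he1
  have hρhalf : ρ < 1/2 := by
    rw [hρ]; split
    · exact max_lt hlam hbhat
    · exact hbhat
  set x : ℝ := 1 - 2*β with hxdef
  set y : ℝ := 1 - 2*ρ with hydef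
  have hx : 0 < x := by simp [hxdef]; linarith
  have hy : 0 < y := by simp [hydef]; linarith
  set K : ℝ := (L + Lhat) ^ 2 * M ^ (2 * |lam - bhat| * ind) with hK
  have hK0 : 0 ≤ K := by positivity
  -- pointwise bound
  have key : ∀ s ∈ Ioc (0:ℝ) t,
      (t - s) ^ (-(2*β)) * (L * s ^ (-lam) + Lhat * s ^ (-bhat)) ^ 2
        ≤ K * ((t - s) ^ (x - 1) * s ^ (y - 1)) := by
    intro s hs
    have hs0 : 0 < s := hs.1
    have hst : s ≤ t := hs.2
    have hsM : s ≤ M := hst.trans htM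
    have aux : ∀ μ : ℝ, μ ≤ ρ → ρ - μ ≤ e1 → s ^ (-μ) ≤ M ^ e1 * s ^ (-ρ) := by
      intro μ hμρ hμe
      have h1 : s ^ (-μ) = s ^ (ρ - μ) * s ^ (-ρ) := by
        rw [← Real.rpow_add hs0]; ring_nf
      rw [h1]
      have h2 : s ^ (ρ - μ) ≤ M ^ (ρ - μ) :=
        Real.rpow_le_rpow hs0.le hsM (by linarith)
      have h3 : M ^ (ρ - μ) ≤ M ^ e1 :=
        Real.rpow_le_rpow_of_exponent_le hM1 hμe
      exact mul_le_mul_of_nonneg_right (h2.trans h3) (Real.rpow_nonneg hs0.le _)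
    have claim : L * s ^ (-lam) + Lhat * s ^ (-bhat) ≤ (L + Lhat) * M ^ e1 * s ^ (-ρ) := by
      by_cases hL0 : 0 < L
      · have hind1 : ind = 1 := by simp [hind, hL0]
        have hρ' : ρ = max lam bhat := by rw [hρ]; simp [hL0]
        have hA : s ^ (-lam) ≤ M ^ e1 * s ^ (-ρ) := by
          apply aux lam (hρ' ▸ le_max_left _ _)
          rw [he1, hind1, mul_one, hρ']
          rcases le_total lam bhat with h | h
          · rw [max_eq_right h, abs_sub_comm, abs_of_nonneg (by linarith)]
          · rw [max_eq_left h]; simp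
        have hB : s ^ (-bhat) ≤ M ^ e1 * s ^ (-ρ) := by
          apply aux bhat (hρ' ▸ le_max_right _ _)
          rw [he1, hind1, mul_one, hρ']
          rcases le_total lam bhat with h | h
          · rw [max_eq_right h]; simp
          · rw [max_eq_left h, abs_of_nonneg (by linarith)]
        calc L * s ^ (-lam) + Lhat * s ^ (-bhat)
            ≤ L * (M ^ e1 * s ^ (-ρ)) + Lhat * (M ^ e1 * s ^ (-ρ)) := by
              gcongr
          _ = (L + Lhat) * M ^ e1 * s ^ (-ρ) := by ring
      · have hL0' : L = 0 := le_antisymm (not_lt.mp hL0) hL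
        have hind0 : ind = 0 := by simp [hind, hL0]
        have hρ' : ρ = bhat := by rw [hρ]; simp [hL0]
        rw [hL0', he1, hind0, mul_zero, Real.rpow_zero, hρ']
        simp
    have hsq : (L * s ^ (-lam) + Lhat * s ^ (-bhat)) ^ 2
        ≤ ((L + Lhat) * M ^ e1 * s ^ (-ρ)) ^ 2 := by
      apply pow_le_pow_left₀ (by positivity) claim
    have hexp : ((L + Lhat) * M ^ e1 * s ^ (-ρ)) ^ 2 = K * s ^ (y - 1) := by
      rw [hK, hydef]
      have h1 : (M ^ e1) ^ 2 = M ^ (2 * |lam - bhat| * ind) := by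
        rw [← Real.rpow_natCast (M ^ e1) 2, ← Real.rpow_mul hM0.le, he1]
        congr 1; push_cast; ring
      have h2 : (s ^ (-ρ)) ^ 2 = s ^ (1 - 2*ρ - 1) := by
        rw [← Real.rpow_natCast (s ^ (-ρ)) 2, ← Real.rpow_mul hs0.le]
        congr 1; push_cast; ring
      rw [mul_pow, mul_pow, h1, h2]
    have hts : (0:ℝ) ≤ t - s := by linarith
    have hcomm : (t - s) ^ (x - 1) = (t - s) ^ (-(2*β)) := by
      rw [hxdef]; norm_num
    rw [hcomm]
    calc (t - s) ^ (-(2*β)) * (L * s ^ (-lam) + Lhat * s ^ (-bhat)) ^ 2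
        ≤ (t - s) ^ (-(2*β)) * (K * s ^ (y - 1)) := by
          rw [← hexp]
          exact mul_le_mul_of_nonneg_left hsq (Real.rpow_nonneg hts _)
      _ = K * ((t - s) ^ (-(2*β)) * s ^ (y - 1)) := by ring
  obtain ⟨hint, hval⟩ := scaled_beta x y t hx hy ht0
  calc (∫⁻ s in Set.Ioc (0:ℝ) t,
          ENNReal.ofReal ((t - s) ^ (-(2*β)) * (L * s ^ (-lam) + Lhat * s ^ (-bhat)) ^ 2))
      ≤ ∫⁻ s in Set.Ioc (0:ℝ) t,
          ENNReal.ofReal (K * ((t - s) ^ (x - 1) * s ^ (y - 1))) := by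
        apply lintegral_mono_ae
        filter_upwards [ae_restrict_mem measurableSet_Ioc] with s hs
        exact ENNReal.ofReal_le_ofReal (key s hs)
    _ = ENNReal.ofReal K * ∫⁻ s in Set.Ioc (0:ℝ) t,
          ENNReal.ofReal ((t - s) ^ (x - 1) * s ^ (y - 1)) := by
        simp_rw [ENNReal.ofReal_mul hK0]
        rw [lintegral_const_mul' _ _ ENNReal.ofReal_ne_top]
    _ = ENNReal.ofReal K * ENNReal.ofReal (t ^ (x + y - 1) * Beta x y) := by
        rw [← MeasureTheory.ofReal_integral_eq_lintegral_ofReal hint ?_, hval]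
        filter_upwards [ae_restrict_mem measurableSet_Ioc] with s hs
        have h1 : (0:ℝ) ≤ t - s := by linarith [hs.2]
        exact mul_nonneg (Real.rpow_nonneg h1 _) (Real.rpow_nonneg hs.1.le _)
    _ ≤ ENNReal.ofReal ((L + Lhat) ^ 2 *
          M ^ (2 * |lam - bhat| * ind) * Beta x y * t ^ (1 - 2*β - 2*ρ)) := by
        rw [← ENNReal.ofReal_mul hK0]
        apply ENNReal.ofReal_le_ofReal
        have hxy : x + y - 1 = 1 - 2*β - 2*ρ := by rw [hxdef, hydef]; ring
        rw [hxy, hK]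
        exact le_of_eq (by ring)
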